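/- arXiv:1511.06048 — 2 statements merged into one kernel-verified Lean document; each statement's English description precedes it below -/
import Mathlib

section
/- Let L be a first-order language all of whose symbols are function symbols, with no nullary and no unary function symbols and only finitely many function symbols in total, and let 𝒜 be an orderly L-algebra. If 𝒜 is Ramsey, then for every reduction ℬ of 𝒜, every n ∈ ℕ, and every X ⊆ ‖𝒜‖ⁿ, there exists a reduction 𝒞 of ℬ such that ‖𝒞‖ⁿ_< is either contained in X or disjoint from X, where ‖𝒞‖ⁿ_< = { (𝒞(t₁), …, 𝒞(tₙ)) : t₁, …, tₙ orderly terms with t₁ < ⋯ < tₙ }. -/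
open Function Set

universe u v w

/-- Terms of a purely functional first-order language whose function symbols
of arity `n` form the type `F n`, with variables indexed by `ℕ`. -/
inductive Tm (F : ℕ → Type u) : Type u
  | var : ℕ → Tm F
  | func : {n : ℕ} → F n → (Fin n → Tm F) → Tm F

namespace Tm

variable {F : ℕ → Type u} {A : Type v} {β : Type w}

/-- The list of (indices of) variables occurring in a term, from left to right. -/
def varList : Tm F → List ℕ
  | .var i => [i]
  | .func (n := n) _ ts => (List.finRange n).flatMap fun i => (ts i).varList

/-- A term is *orderly* if the indices of the variables occurring in it,
read from left to right, are strictly increasing. -/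
def Orderly (t : Tm F) : Prop := t.varList.Chain' (· < ·)

/-- `TermLT s t` iff the index of the last variable of `s` is less than the
index of the first variable of `t`. -/
def TermLT (s t : Tm F) : Prop :=
  ∃ i j, s.varList.getLast? = some i ∧ t.varList.head? = some j ∧ i < j

/-- An infinite sequence of orderly terms is *admissible* iff it is increasing
with respect to `TermLT`. -/
def Admissible (ts : ℕ → Tm F) : Prop :=
  (∀ i, (ts i).Orderly) ∧ ∀ i, TermLT (ts i) (ts (i + 1))

/-- `s.subst σ` replaces each variable `vᵢ` in `s` by `σ i`. -/
def subst (σ : ℕ → Tm F) : Tm F → Tm F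
  | .var i => σ i
  | .func f ts => .func f fun i => (ts i).subst σ

/-- Interpretation of a term in a structure with underlying set `A` whose
interpretation of the function symbols is `I`, under the assignment `a`. -/
def realize (I : ∀ n, F n → (Fin n → A) → A) (a : ℕ → A) : Tm F → A
  | .var i => a i
  | .func (n := n) f ts => I n f fun i => (ts i).realize I a

end Tm

section General

variable {F : ℕ → Type u} {A : Type v} {β : Type w}

/-- `b` is a reduction of `a` (with respect to the algebra `(A, I)`). -/
def SeqReduction (I : ∀ n, F n → (Fin n → A) → A) (b a : ℕ → A) : Prop :=
  ∃ ts : ℕ → Tm F, Tm.Admissible ts ∧ ∀ i, b i = (ts i).realize I a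

/-- The set of finite reductions of `a`. -/
def FR (I : ∀ n, F n → (Fin n → A) → A) (a : ℕ → A) : Set A :=
  { x | ∃ t : Tm F, t.Orderly ∧ x = t.realize I a }

/-- `(A, I)` is a Ramsey algebra. -/
def RamseyAlg (I : ∀ n, F n → (Fin n → A) → A) : Prop :=
  ∀ (a : ℕ → A) (X : Set A),
    ∃ b, SeqReduction I b a ∧ (FR I b ⊆ X ∨ FR I b ∩ X = ∅)

/-- `(A, I)` is Ramsey below `a`. -/
def RamseyBelow (I : ∀ n, F n → (Fin n → A) → A) (a : ℕ → A) : Prop :=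
  ∀ b, SeqReduction I b a → ∀ X : Set A,
    ∃ c, SeqReduction I c b ∧ (FR I c ⊆ X ∨ FR I c ∩ X = ∅)

/-- An increasing tuple `t₁ < t₂ < ⋯ < tₙ` of orderly terms. -/
def OrdTuple {n : ℕ} (t : Fin n → Tm F) : Prop :=
  (∀ i, (t i).Orderly) ∧ ∀ i j : Fin n, i < j → Tm.TermLT (t i) (t j)

/-- `𝒜` (as a function on orderly terms) is an orderly algebra. -/
def IsOrderlyAlg (𝒜 : Tm F → β) : Prop :=
  ∀ (n : ℕ) (f : F n) (t t' : Fin n → Tm F), OrdTuple t → OrdTuple t' →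
    (∀ k, 𝒜 (t k) = 𝒜 (t' k)) → 𝒜 (.func f t) = 𝒜 (.func f t')

/-- The universe of an orderly algebra: its range on orderly terms. -/
def OAUniv (𝒜 : Tm F → β) : Set β := 𝒜 '' { t | t.Orderly }

/-- `ℬ` is a reduction of the orderly algebra `𝒜` (as functions on orderly terms). -/
def OAReduction (ℬ 𝒜 : Tm F → β) : Prop :=
  ∃ ts : ℕ → Tm F, Tm.Admissible ts ∧ ∀ s : Tm F, s.Orderly → ℬ s = 𝒜 (s.subst ts)

/-- `ℬ` is homogeneous for `X`. -/
def Homog (ℬ : Tm F → β) (X : Set β) : Prop :=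
  OAUniv ℬ ⊆ X ∨ OAUniv ℬ ∩ X = ∅

/-- An orderly algebra is weakly Ramsey. -/
def WeaklyRamseyOA (𝒜 : Tm F → β) : Prop :=
  ∀ X ⊆ OAUniv 𝒜, ∃ ℬ, OAReduction ℬ 𝒜 ∧ Homog ℬ X

/-- An orderly algebra is Ramsey. -/
def RamseyOA (𝒜 : Tm F → β) : Prop :=
  ∀ ℬ, OAReduction ℬ 𝒜 → ∀ X ⊆ OAUniv 𝒜, ∃ 𝒞, OAReduction 𝒞 ℬ ∧ Homog 𝒞 X

/-- The orderly algebra induced from the algebra `(A, I)` by the sequence `a`. -/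
def inducedOA (I : ∀ n, F n → (Fin n → A) → A) (a : ℕ → A) : Tm F → A :=
  fun t => t.realize I a

/-- `[FR(c)]ⁿ_<` : increasing `n`-tuples of finite reductions of `c`. -/
def FRtuple (I : ∀ n, F n → (Fin n → A) → A) (n : ℕ) (c : ℕ → A) : Set (Fin n → A) :=
  { x | ∃ t : Fin n → Tm F, OrdTuple t ∧ ∀ i, x i = (t i).realize I c }

/-- `‖𝒞‖ⁿ_<` for an orderly algebra `𝒞`. -/
def OATuple (n : ℕ) (𝒞 : Tm F → β) : Set (Fin n → β) :=
  { x | ∃ t : Fin n → Tm F, OrdTuple t ∧ ∀ i, x i = 𝒞 (t i) }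

/-- The basic set `[n, a]` of the preorder with approximations `(ᵂA, ≤)`. -/
def Approx (I : ∀ n, F n → (Fin n → A) → A) (n : ℕ) (a : ℕ → A) : Set (ℕ → A) :=
  { b | SeqReduction I b a ∧ ∀ i < n, b i = a i }

/-- The natural topology on `ᵂA`, generated by the sets `[n, a]`. -/
def natTop (I : ∀ n, F n → (Fin n → A) → A) : TopologicalSpace (ℕ → A) :=
  TopologicalSpace.generateFrom { S | ∃ n a, S = Approx I n a }

/-- A subset `X ⊆ ᵂA` is Ramsey. -/
def RamseySet (I : ∀ n, F n → (Fin n → A) → A) (X : Set (ℕ → A)) : Prop :=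
  ∀ (n : ℕ) (a : ℕ → A), ∃ b ∈ Approx I n a,
    Approx I n b ⊆ X ∨ Approx I n b ∩ X = ∅

/-- `X` has the property of Baire in the natural topology:
its symmetric difference with some open set is meager. -/
def HasBaireProperty (I : ∀ n, F n → (Fin n → A) → A) (X : Set (ℕ → A)) : Prop :=
  ∃ U : Set (ℕ → A), @IsOpen _ (natTop I) U ∧ @IsMeagre _ (natTop I) (symmDiff X U)

end General

/-- The language with a single binary function symbol. -/
inductive BinF : ℕ → Type
  | f : BinF 2

/-- Application of the binary function symbol: the term `f s t`. -/
def fapp (s t : Tm BinF) : Tm BinF := .func BinF.f ![s, t]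

/-- The interpretation of the single binary function symbol by a binary
operation `g` on `A`. -/
def binI {A : Type v} (g : A → A → A) : ∀ n, BinF n → (Fin n → A) → A
  | _, BinF.f, args => g (args 0) (args 1)

/-- The pair `(tˣ, tʸ)`: `(vᵢˣ, vᵢʸ) = (v_{2i}, v_{2i+1})` and
`((f s t)ˣ, (f s t)ʸ) = (f sˣ sʸ, f tˣ tʸ)`. -/
def xyPair : Tm BinF → Tm BinF × Tm BinF
  | .var i => (.var (2 * i), .var (2 * i + 1))
  | .func BinF.f ts =>
      (fapp (xyPair (ts 0)).1 (xyPair (ts 0)).2, fapp (xyPair (ts 1)).1 (xyPair (ts 1)).2)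

/-- The orderly algebra `♯𝒜`, `♯𝒜(t) = (𝒜(tˣ), 𝒜(tʸ))`. -/
def sharpOA {β : Type w} (𝒜 : Tm BinF → β) : Tm BinF → β × β :=
  fun t => (𝒜 (xyPair t).1, 𝒜 (xyPair t).2)
section Aux
variable {F : ℕ → Type u} {A : Type v} {β : Type w}

namespace Tm

theorem subst_subst (σ ρ : ℕ → Tm F) (t : Tm F) :
    (t.subst σ).subst ρ = t.subst (fun i => (σ i).subst ρ) := by
  induction t with
  | var i => rfl
  | func f ts ih => simp only [subst, func.injEq, heq_eq_eq, true_and]; funext i; exact ih i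

theorem subst_congr {σ ρ : ℕ → Tm F} : ∀ {t : Tm F}, (∀ i ∈ t.varList, σ i = ρ i) →
    t.subst σ = t.subst ρ
  | .var i, h => h i (by simp [varList])
  | .func f ts, h => by
    simp only [subst, func.injEq, heq_eq_eq, true_and]
    funext j
    refine subst_congr (fun i hi => h i ?_)
    simp only [varList, List.mem_flatMap]
    exact ⟨j, List.mem_finRange j, hi⟩

theorem subst_var : ∀ t : Tm F, t.subst Tm.var = t
  | .var i => rfl
  | .func f ts => by
    simp only [subst, func.injEq, heq_eq_eq, true_and]
    funext j; exact subst_var (ts j)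

theorem varList_subst (σ : ℕ → Tm F) : ∀ t : Tm F,
    (t.subst σ).varList = t.varList.flatMap (fun i => (σ i).varList)
  | .var i => by simp [subst, varList]
  | .func f ts => by
    simp only [subst, varList, List.flatMap_assoc]
    exact List.flatMap_congr fun j _ => varList_subst σ (ts j)

theorem varList_ne_nil [IsEmpty (F 0)] : ∀ t : Tm F, t.varList ≠ []
  | .var i => by simp [varList]
  | .func (n := n) f ts => by
    have hn : n ≠ 0 := fun h => (by subst h; exact IsEmpty.false f)
    have : List.finRange n ≠ [] := by
      simpa [← List.length_eq_zero_iff] using hn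
    obtain ⟨j, l, hl⟩ := List.exists_cons_of_ne_nil this
    simp only [varList, hl, List.flatMap_cons]
    intro hc
    exact varList_ne_nil (ts j) (List.append_eq_nil_iff.mp hc).1

end Tm
end Aux
section Aux2
variable {F : ℕ → Type u}

theorem incr_le_getLast : ∀ {l : List ℕ}, l.Chain' (· < ·) →
    ∀ v ∈ l, ∀ x ∈ l.getLast?, v ≤ x := by
  intro l
  induction l with
  | nil => intro _ v hv; simp at hv
  | cons a tl ih =>
    intro hc v hv x hx
    rcases List.eq_nil_or_concat tl with h | _
    · subst h; simp_all
    cases tl with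
    | nil => simp_all
    | cons b tl' =>
      rw [List.getLast?_cons_cons] at hx
      rcases List.mem_cons.mp hv with h | h
      · subst h
        have hab : v < b := (List.isChain_cons_cons.mp hc).1
        have := ih (List.isChain_cons_cons.mp hc).2 b (by simp) x hx
        omega
      · exact ih (List.isChain_cons_cons.mp hc).2 v h x hx

theorem incr_head_le_getLast {l : List ℕ} (hc : l.Chain' (· < ·)) :
    ∀ x ∈ l.head?, ∀ y ∈ l.getLast?, x ≤ y := fun x hx y hy =>
  incr_le_getLast hc x (List.mem_of_mem_head? hx) y hy

theorem head?_flatMap {f : ℕ → List ℕ} : ∀ {l : List ℕ} {a : ℕ}, l.head? = some a →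
    f a ≠ [] → (l.flatMap f).head? = (f a).head? := by
  intro l a hl hfa
  cases l with
  | nil => simp at hl
  | cons b tl =>
    simp only [List.head?_cons, Option.some.injEq] at hl
    subst hl
    rw [List.flatMap_cons, List.head?_append_of_ne_nil _ hfa]

theorem flatMap_ne_nil {f : ℕ → List ℕ} {l : List ℕ} {a : ℕ} (ha : a ∈ l)
    (hfa : f a ≠ []) : l.flatMap f ≠ [] := by
  intro h
  rw [List.flatMap_eq_nil_iff] at h
  exact hfa (h a ha)

theorem getLast?_flatMap {f : ℕ → List ℕ} : ∀ {l : List ℕ} {a : ℕ}, l.getLast? = some a →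
    f a ≠ [] → (l.flatMap f).getLast? = (f a).getLast? := by
  intro l
  induction l with
  | nil => simp
  | cons b tl ih =>
    intro a hl hfa
    cases tl with
    | nil => simp only [List.getLast?_singleton, Option.some.injEq] at hl; subst hl
             simp [List.flatMap_cons]
    | cons c tl' =>
      rw [List.getLast?_cons_cons] at hl
      have h1 : (c :: tl').flatMap f ≠ [] := by
        have : a ∈ c :: tl' := List.mem_of_mem_getLast? hl
        exact flatMap_ne_nil this hfa
      rw [List.flatMap_cons, List.getLast?_append_of_ne_nil _ h1]
      exact ih hl hfa

theorem incr_flatMap {f : ℕ → List ℕ} : ∀ {l : List ℕ}, l.Chain' (· < ·) →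
    (∀ i ∈ l, (f i).Chain' (· < ·)) → (∀ i ∈ l, f i ≠ []) →
    (∀ i ∈ l, ∀ j ∈ l, i < j → ∀ a ∈ (f i).getLast?, ∀ b ∈ (f j).head?, a < b) →
    (l.flatMap f).Chain' (· < ·) := by
  intro l
  induction l with
  | nil => intro _ _ _ _; exact List.isChain_nil
  | cons a tl ih =>
    intro hc h1 h2 h3
    rw [List.flatMap_cons, List.Chain', List.isChain_append]
    refine ⟨h1 a (by simp), ih hc.tail (fun i hi => h1 i (by simp [hi]))
      (fun i hi => h2 i (by simp [hi]))
      (fun i hi j hj hij => h3 i (by simp [hi]) j (by simp [hj]) hij), ?_⟩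
    intro x hx y hy
    cases tl with
    | nil => simp at hy
    | cons b tl' =>
      rw [head?_flatMap (by simp) (h2 b (by simp))] at hy
      have hab : a < b := (List.isChain_cons_cons.mp hc).1
      exact h3 a (by simp) b (by simp) hab x hx y hy

theorem incr_map {g : ℕ → ℕ} : ∀ {l : List ℕ}, l.Chain' (· < ·) →
    (∀ a ∈ l, ∀ b ∈ l, a < b → g a < g b) → (l.map g).Chain' (· < ·) := by
  intro l
  induction l with
  | nil => simp
  | cons a tl ih =>
    intro hc hg
    cases tl with
    | nil => exact List.isChain_singleton _
    | cons b tl' =>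
      simp only [List.map_cons] at *
      rw [List.Chain', List.isChain_cons_cons]
      constructor
      · exact hg a (by simp) b (by simp) (List.isChain_cons_cons.mp hc).1
      · exact ih hc.tail (fun x hx y hy => hg x (by simp [hx]) y (by simp [hy]))

namespace Tm

/-- Good sequences of terms: all blocks increasing. -/
def Good (σ : ℕ → Tm F) : Prop :=
  ∀ i j : ℕ, i < j → ∀ a ∈ (σ i).varList.getLast?, ∀ b ∈ (σ j).varList.head?, a < b

theorem Admissible.good [IsEmpty (F 0)] {σ : ℕ → Tm F} (h : Admissible σ) : Good σ := by
  intro i j hij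
  induction j with
  | zero => omega
  | succ j ih =>
    intro a ha b hb
    obtain ⟨x, y, hx, hy, hxy⟩ := h.2 j
    rcases Nat.lt_or_ge i j with h' | h'
    · have hne := varList_ne_nil (F := F) (σ j)
      have hc : (σ j).varList.head? = some ((σ j).varList.head hne) :=
        List.head?_eq_head hne
      have h1 : a < (σ j).varList.head hne := ih h' a ha _ hc
      have h2 : (σ j).varList.head hne ≤ x := incr_head_le_getLast (h.1 j) _ hc x hx
      have hby : b = y := by rw [hy] at hb; simpa using hb.symm
      omega
    · have : i = j := by omega
      subst this
      rw [hx] at ha; rw [hy] at hb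
      cases ha; cases hb
      exact hxy

theorem Orderly.subst [IsEmpty (F 0)] {t : Tm F} {σ : ℕ → Tm F} (ht : t.Orderly)
    (h1 : ∀ i, (σ i).Orderly) (h2 : Good σ) : (t.subst σ).Orderly := by
  unfold Orderly
  rw [varList_subst]
  exact incr_flatMap ht (fun i _ => h1 i) (fun i _ => varList_ne_nil _)
    (fun i _ j _ hij => h2 i j hij)

theorem head?_varList_subst {t : Tm F} {σ : ℕ → Tm F} {a : ℕ}
    (h : t.varList.head? = some a) (hne : (σ a).varList ≠ []) :
    (t.subst σ).varList.head? = (σ a).varList.head? := by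
  rw [varList_subst]; exact head?_flatMap h hne

theorem getLast?_varList_subst {t : Tm F} {σ : ℕ → Tm F} {a : ℕ}
    (h : t.varList.getLast? = some a) (hne : (σ a).varList ≠ []) :
    (t.subst σ).varList.getLast? = (σ a).varList.getLast? := by
  rw [varList_subst]; exact getLast?_flatMap h hne

theorem TermLT.subst [IsEmpty (F 0)] {s t : Tm F} {σ : ℕ → Tm F} (h : TermLT s t)
    (h2 : Good σ) : TermLT (s.subst σ) (t.subst σ) := by
  obtain ⟨i, j, hi, hj, hij⟩ := h
  have hne1 : (σ i).varList ≠ [] := varList_ne_nil _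
  have hne2 : (σ j).varList ≠ [] := varList_ne_nil _
  have ha : (σ i).varList.getLast? = some ((σ i).varList.getLast hne1) :=
    List.getLast?_eq_getLast hne1
  have hb : (σ j).varList.head? = some ((σ j).varList.head hne2) :=
    List.head?_eq_head hne2
  refine ⟨(σ i).varList.getLast hne1, (σ j).varList.head hne2, ?_, ?_, ?_⟩
  · rw [getLast?_varList_subst hi hne1]; exact ha
  · rw [head?_varList_subst hj hne2]; exact hb
  · exact h2 i j hij _ ha _ hb

theorem Admissible.comp [IsEmpty (F 0)] {σ τ : ℕ → Tm F} (hσ : Admissible σ)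
    (hτ : Admissible τ) : Admissible (fun i => (τ i).subst σ) :=
  ⟨fun i => (hτ.1 i).subst hσ.1 hσ.good, fun i => (hτ.2 i).subst hσ.good⟩

theorem admissible_var : Admissible (F := F) Tm.var := by
  constructor
  · intro i; simp [Orderly, varList, List.Chain', List.isChain_singleton]
  · intro i; exact ⟨i, i + 1, by simp [varList], by simp [varList], by omega⟩

end Tm
end Aux2
section Aux3
variable {F : ℕ → Type u} {β : Type w}

theorem incr_head?_le : ∀ {l : List ℕ}, l.Chain' (· < ·) →
    ∀ x ∈ l.head?, ∀ v ∈ l, x ≤ v := by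
  intro l
  induction l with
  | nil => simp
  | cons a tl ih =>
    intro hc x hx v hv
    have hxa : x = a := by simpa using hx.symm
    subst hxa
    rcases List.mem_cons.mp hv with h | h
    · omega
    cases tl with
    | nil => simp at h
    | cons b tl' =>
      have hab : x < b := (List.isChain_cons_cons.mp hc).1
      have := ih hc.tail b (by simp) v h
      omega

theorem foldmax_le {l : List ℕ} {x : ℕ} (h : ∀ v ∈ l, v ≤ x) : l.foldr max 0 ≤ x := by
  induction l with
  | nil => simp
  | cons a tl ih => simp only [List.foldr_cons]
                    exact max_le (h a (by simp)) (ih fun v hv => h v (by simp [hv]))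

theorem le_foldmax {l : List ℕ} {v : ℕ} (h : v ∈ l) : v ≤ l.foldr max 0 := by
  induction l with
  | nil => simp at h
  | cons a tl ih =>
    rcases List.mem_cons.mp h with h | h
    · subst h; simp
    · simp only [List.foldr_cons]; exact le_trans (ih h) (le_max_right _ _)

namespace Tm

/-- Bound on the variables of a term. -/
def VarsLE (t : Tm F) (k : ℕ) : Prop := ∀ v ∈ t.varList, v ≤ k

/-- All variables of a term exceed `k`. -/
def VarsGT (t : Tm F) (k : ℕ) : Prop := ∀ v ∈ t.varList, k < v

/-- The largest variable of a term. -/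
def maxv (t : Tm F) : ℕ := t.varList.foldr max 0

theorem varsLE_maxv (t : Tm F) : t.VarsLE t.maxv := fun _ h => le_foldmax h

theorem varList_rename (h : ℕ → ℕ) (t : Tm F) :
    (t.subst (fun i => .var (h i))).varList = t.varList.map h := by
  rw [varList_subst]
  induction t.varList with
  | nil => simp
  | cons a tl ih => simp only [varList] at ih ⊢
                    simp [List.flatMap_cons, ih]

theorem Orderly.rename {t : Tm F} {h : ℕ → ℕ} (ht : t.Orderly)
    (hm : ∀ a ∈ t.varList, ∀ b ∈ t.varList, a < b → h a < h b) :
    (t.subst (fun i => .var (h i))).Orderly := by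
  unfold Orderly
  rw [varList_rename]
  exact incr_map ht hm

theorem TermLT.rename {s t : Tm F} {h : ℕ → ℕ} (hlt : TermLT s t)
    (hm : ∀ a ∈ s.varList.getLast?, ∀ b ∈ t.varList.head?, a < b → h a < h b) :
    TermLT (s.subst (fun i => .var (h i))) (t.subst (fun i => .var (h i))) := by
  obtain ⟨i, j, hi, hj, hij⟩ := hlt
  refine ⟨h i, h j, ?_, ?_, hm i hi j hj hij⟩
  · rw [varList_rename, List.getLast?_map, hi]; rfl
  · rw [varList_rename, List.head?_map, hj]; rfl

theorem varsGT_subst {t : Tm F} {σ : ℕ → Tm F} {k : ℕ} (ht : t.VarsGT k)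
    (hσ : ∀ i, k < i → (σ i).VarsGT k) : (t.subst σ).VarsGT k := by
  intro v hv
  rw [varList_subst, List.mem_flatMap] at hv
  obtain ⟨i, hi, hvi⟩ := hv
  exact hσ i (ht i hi) v hvi

theorem VarsGT.mono {t : Tm F} {k k' : ℕ} (h : t.VarsGT k) (hk : k' ≤ k) : t.VarsGT k' :=
  fun v hv => lt_of_le_of_lt hk (h v hv)

theorem varsLE_subst {t : Tm F} {σ : ℕ → Tm F} {k : ℕ} (ht : ∀ i ∈ t.varList, (σ i).VarsLE k) :
    (t.subst σ).VarsLE k := by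
  intro v hv
  rw [varList_subst, List.mem_flatMap] at hv
  obtain ⟨i, hi, hvi⟩ := hv
  exact ht i hi v hvi

/-- An orderly term is `VarsGT k` as soon as it is `TermLT`-above a term whose
variables are bounded by `k`. -/
theorem varsGT_of_termLT [IsEmpty (F 0)] {s t : Tm F} (hs : s.Orderly) (ht : t.Orderly)
    (hk : TermLT s t) : t.VarsGT s.maxv := by
  obtain ⟨i, j, hi, hj, hij⟩ := hk
  intro v hv
  have h1 : s.maxv ≤ i := foldmax_le (fun w hw => incr_le_getLast hs w hw i hi)
  have h2 : j ≤ v := incr_head?_le ht j hj v hv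
  omega

end Tm

open Tm

theorem ordTuple_subst [IsEmpty (F 0)] {n : ℕ} {t : Fin n → Tm F} {σ : ℕ → Tm F}
    (ht : OrdTuple t) (h1 : ∀ i, (σ i).Orderly) (h2 : Good σ) :
    OrdTuple (fun j => (t j).subst σ) :=
  ⟨fun j => (ht.1 j).subst h1 h2, fun i j hij => (ht.2 i j hij).subst h2⟩

theorem oaReduction_trans [IsEmpty (F 0)] {𝒞 ℬ 𝒜 : Tm F → β}
    (h1 : OAReduction 𝒞 ℬ) (h2 : OAReduction ℬ 𝒜) : OAReduction 𝒞 𝒜 := by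
  obtain ⟨τ, hτ, hC⟩ := h1
  obtain ⟨σ, hσ, hB⟩ := h2
  refine ⟨fun i => (τ i).subst σ, hσ.comp hτ, fun s hs => ?_⟩
  rw [hC s hs, hB _ (hs.subst hτ.1 hτ.good), Tm.subst_subst]

theorem oaReduction_refl {ℬ : Tm F → β} : OAReduction ℬ ℬ :=
  ⟨Tm.var, Tm.admissible_var, fun s _ => by rw [Tm.subst_var]⟩

theorem admissible_tail {g : ℕ → Tm F} (hg : Tm.Admissible g) (m : ℕ) :
    Tm.Admissible (fun i => g (i + m)) :=
  ⟨fun i => hg.1 (i + m), fun i => by simpa [Nat.add_right_comm] using hg.2 (i + m)⟩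

end Aux3
section Aux4
variable {F : ℕ → Type u}

namespace Tm

/-- Depth of a term. -/
def depth : Tm F → ℕ
  | .var _ => 0
  | .func (n := n) _ ts => (Finset.univ.sup fun i : Fin n => (ts i).depth) + 1

theorem length_le_length_flatMap {α : Type*} {f : α → List ℕ} :
    ∀ {l : List α}, (∀ i ∈ l, f i ≠ []) → l.length ≤ (l.flatMap f).length := by
  intro l
  induction l with
  | nil => simp
  | cons a tl ih =>
    intro h
    rw [List.flatMap_cons, List.length_append, List.length_cons]
    have h1 : 1 ≤ (f a).length := by
      have := h a (by simp)
      cases hfa : f a with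
      | nil => exact absurd hfa this
      | cons x xs => simp
    have h2 := ih (fun i hi => h i (by simp [hi]))
    omega

theorem length_add_le_length_flatMap {α : Type*} {f : α → List ℕ} :
    ∀ {l : List α}, (∀ i ∈ l, f i ≠ []) → ∀ i ∈ l,
      (f i).length + (l.length - 1) ≤ (l.flatMap f).length := by
  intro l
  induction l with
  | nil => simp
  | cons a tl ih =>
    intro h i hi
    rw [List.flatMap_cons, List.length_append, List.length_cons]
    rcases List.mem_cons.mp hi with h' | h'
    · subst h'
      have := length_le_length_flatMap (fun j hj => h j (List.mem_cons_of_mem _ hj))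
      omega
    · have h2 := ih (fun j hj => h j (List.mem_cons_of_mem _ hj)) i h'
      have h1 : 1 ≤ (f a).length := by
        have := h a (by simp)
        cases hfa : f a with
        | nil => exact absurd hfa this
        | cons x xs => simp
      cases tl with
      | nil => simp at h'
      | cons b tl' => simp only [List.length_cons] at h2 ⊢; omega

theorem depth_lt_length [IsEmpty (F 0)] [IsEmpty (F 1)] :
    ∀ t : Tm F, t.depth < t.varList.length
  | .var i => by simp [depth, varList]
  | .func (n := n) f ts => by
    have hn2 : 2 ≤ n := by
      rcases n with _ | n
      · exact (IsEmpty.false f).elim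
      rcases n with _ | n
      · exact (IsEmpty.false f).elim
      omega
    have hne : Nonempty (Fin n) := ⟨⟨0, by omega⟩⟩
    obtain ⟨i₀, _, hsup⟩ := Finset.exists_mem_eq_sup Finset.univ
      (Finset.univ_nonempty (α := Fin n)) (fun i => (ts i).depth)
    have hIH := depth_lt_length (ts i₀)
    have hlen : (varList (ts i₀)).length + ((List.finRange n).length - 1) ≤
        (varList (.func f ts)).length := by
      simpa [varList] using length_add_le_length_flatMap
        (l := List.finRange n) (f := fun i => varList (ts i))
        (fun i _ => varList_ne_nil (ts i)) i₀ (List.mem_finRange i₀)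
    rw [List.length_finRange] at hlen
    simp only [depth, ← hsup] at *
    omega

theorem finite_varsLE_depthLE [IsEmpty (F 0)] [Finite (Σ n, F n)] :
    ∀ (d k : ℕ), Set.Finite {t : Tm F | t.VarsLE k ∧ t.depth ≤ d} := by
  intro d
  induction d with
  | zero =>
    intro k
    apply Set.Finite.subset ((Set.finite_Iic k).image Tm.var)
    rintro t ⟨h1, h2⟩
    cases t with
    | var i => exact ⟨i, by simpa [Tm.VarsLE, varList] using h1, rfl⟩
    | func f ts => simp [depth] at h2
  | succ d ih =>
    intro k
    apply Set.Finite.subset (((Set.finite_Iic k).image Tm.var).union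
      (Set.finite_iUnion (fun p : Σ n, F n =>
        ((Set.Finite.pi' (fun _ : Fin p.1 => ih k)).image (fun ts => Tm.func p.2 ts)))))
    rintro t ⟨h1, h2⟩
    cases t with
    | var i => exact Or.inl ⟨i, by simpa [Tm.VarsLE, varList] using h1, rfl⟩
    | @func n f ts =>
      refine Or.inr (Set.mem_iUnion.mpr ⟨⟨n, f⟩, ⟨ts, fun i => ⟨?_, ?_⟩, rfl⟩⟩)
      · intro v hv
        refine h1 v ?_
        simp only [varList, List.mem_flatMap]
        exact ⟨i, List.mem_finRange i, hv⟩
      · have hle : (ts i).depth ≤ Finset.univ.sup fun j : Fin n => (ts j).depth := by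
          simpa using Finset.le_sup (f := fun j : Fin n => (ts j).depth) (Finset.mem_univ i)
        simp only [depth] at h2
        omega

theorem exists_list_orderly_varsLE [IsEmpty (F 0)] [IsEmpty (F 1)] [Finite (Σ n, F n)]
    (k : ℕ) : ∃ L : List (Tm F), ∀ t : Tm F, t.Orderly → t.VarsLE k → t ∈ L := by
  have hfin : Set.Finite {t : Tm F | t.VarsLE k ∧ t.depth ≤ k} := finite_varsLE_depthLE k k
  obtain ⟨S, hS⟩ := Set.Finite.exists_finset_coe hfin
  refine ⟨S.toList, fun t ht hle => ?_⟩
  rw [Finset.mem_toList, ← Finset.mem_coe, hS]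
  refine ⟨hle, ?_⟩
  have h1 := depth_lt_length t
  have h2 : t.varList.length ≤ k + 1 := by
    have hnd : t.varList.Nodup := (List.isChain_iff_pairwise.mp ht).imp Nat.ne_of_lt
    have hsub : t.varList.toFinset ⊆ Finset.range (k + 1) := by
      intro v hv
      rw [List.mem_toFinset] at hv
      exact Finset.mem_range.mpr (by have := hle v hv; omega)
    have := Finset.card_le_card hsub
    rw [List.toFinset_card_of_nodup hnd, Finset.card_range] at this
    exact this
  omega

end Tm
end Aux4
section Fusion
variable {F : ℕ → Type u} {β : Type w}

open Tm

/-- Composition of substitution sequences. -/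
def scomp (δ g : ℕ → Tm F) : ℕ → Tm F := fun i => (δ i).subst g

theorem scomp_assoc (δ₂ δ₁ g : ℕ → Tm F) :
    scomp (scomp δ₂ δ₁) g = scomp δ₂ (scomp δ₁ g) := by
  funext i
  exact Tm.subst_subst δ₁ g (δ₂ i)

/-- A one-step fusion substitution at level `k`. -/
structure StepSub (k : ℕ) (δ : ℕ → Tm F) : Prop where
  adm : Tm.Admissible δ
  fix : ∀ i ≤ k, δ i = .var i
  gt : ∀ i, k < i → (δ i).VarsGT k

theorem stepSub_var (k : ℕ) : StepSub k (Tm.var (F := F)) :=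
  ⟨Tm.admissible_var, fun _ _ => rfl, fun i hi => by
    intro v hv; simp [Tm.varList] at hv; omega⟩

theorem StepSub.mono {k k' : ℕ} {δ : ℕ → Tm F} (h : StepSub k' δ) (hk : k ≤ k') :
    StepSub k δ := by
  refine ⟨h.adm, fun i hi => h.fix i (le_trans hi hk), fun i hi => ?_⟩
  rcases le_or_gt i k' with h' | h'
  · rw [h.fix i h']
    intro v hv; simp [Tm.varList] at hv; omega
  · exact ((h.gt i h').mono hk)

theorem StepSub.gt' {k k' : ℕ} {δ : ℕ → Tm F} (h : StepSub k' δ) (hk : k ≤ k') :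
    ∀ i, k < i → (δ i).VarsGT k := (h.mono hk).gt

theorem StepSub.scomp_closure [IsEmpty (F 0)] {k : ℕ} {δ₂ δ₁ : ℕ → Tm F} (h2 : StepSub k δ₂)
    (h1 : StepSub k δ₁) : StepSub k (scomp δ₂ δ₁) := by
  refine ⟨h1.adm.comp h2.adm, fun i hi => ?_, fun i hi => ?_⟩
  · show (δ₂ i).subst δ₁ = _
    rw [h2.fix i hi]
    show δ₁ i = _
    rw [h1.fix i hi]
  · exact Tm.varsGT_subst (h2.gt i hi) h1.gt

theorem subst_scomp_eq [IsEmpty (F 0)] {k : ℕ} {δ : ℕ → Tm F} (h : StepSub k δ)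
    {s : Tm F} (hs : s.VarsLE k) (g : ℕ → Tm F) :
    s.subst (scomp δ g) = s.subst g := by
  show s.subst (fun i => (δ i).subst g) = _
  rw [← Tm.subst_subst]
  congr 1
  calc s.subst δ = s.subst Tm.var := Tm.subst_congr fun i hi => h.fix i (hs i hi)
  _ = s := Tm.subst_var s

variable (ℬ : Tm F → β) (n : ℕ) (Y : β → Set (Fin n → β))

/-- Dichotomy at level `k` for the colouring `Y` relative to the ground sequence `g`. -/
def Dich (g : ℕ → Tm F) (k : ℕ) (s : Tm F) : Prop :=
  (∀ t : Fin n → Tm F, OrdTuple t → (∀ j, (t j).VarsGT k) →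
      (fun j => ℬ ((t j).subst g)) ∈ Y (ℬ (s.subst g))) ∨
  (∀ t : Fin n → Tm F, OrdTuple t → (∀ j, (t j).VarsGT k) →
      (fun j => ℬ ((t j).subst g)) ∉ Y (ℬ (s.subst g)))

theorem dich_transfer [IsEmpty (F 0)] {g δ : ℕ → Tm F} {k k' : ℕ} (hδ : StepSub k' δ)
    (hkk : k ≤ k') {s : Tm F} (hs : s.VarsLE k) (h : Dich ℬ n Y g k s) :
    Dich ℬ n Y (scomp δ g) k s := by
  have hb : ℬ (s.subst (scomp δ g)) = ℬ (s.subst g) := by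
    rw [subst_scomp_eq hδ (fun v hv => le_trans (hs v hv) hkk) g]
  have key : ∀ t : Fin n → Tm F, OrdTuple t → (∀ j, (t j).VarsGT k) →
      OrdTuple (fun j => (t j).subst δ) ∧ (∀ j, ((t j).subst δ).VarsGT k) ∧
      ∀ j, ℬ ((t j).subst (scomp δ g)) = ℬ (((t j).subst δ).subst g) := by
    intro t ht hgt
    refine ⟨ordTuple_subst ht hδ.adm.1 hδ.adm.good,
      fun j => Tm.varsGT_subst (hgt j) (hδ.gt' hkk), fun j => ?_⟩
    show ℬ ((t j).subst (fun i => (δ i).subst g)) = _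
    rw [← Tm.subst_subst]
  rcases h with h | h
  · left
    intro t ht hgt
    obtain ⟨h1, h2, h3⟩ := key t ht hgt
    have he : (fun j => ℬ ((t j).subst (scomp δ g))) =
        fun j => ℬ (((t j).subst δ).subst g) := funext h3
    rw [hb, he]
    exact h _ h1 h2
  · right
    intro t ht hgt
    obtain ⟨h1, h2, h3⟩ := key t ht hgt
    have he : (fun j => ℬ ((t j).subst (scomp δ g))) =
        fun j => ℬ (((t j).subst δ).subst g) := funext h3
    rw [hb, he]
    exact h _ h1 h2

end Fusion
section Fusion2
variable {F : ℕ → Type u} {β : Type w}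
variable [IsEmpty (F 0)] [IsEmpty (F 1)] [Finite (Σ n, F n)]

open Tm

variable {𝒜 ℬ : Tm F → β} {n : ℕ}

theorem handle_one
    (IH : ∀ 𝒯 : Tm F → β, OAReduction 𝒯 𝒜 → ∀ Z : Set (Fin n → β),
      Z ⊆ { x | ∀ i, x i ∈ OAUniv 𝒜 } →
      ∃ 𝒞, OAReduction 𝒞 𝒯 ∧ (OATuple n 𝒞 ⊆ Z ∨ OATuple n 𝒞 ∩ Z = ∅))
    (hB : OAReduction ℬ 𝒜) {Y : β → Set (Fin n → β)}
    (hY : ∀ b, Y b ⊆ { x | ∀ i, x i ∈ OAUniv 𝒜 })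
    (g : ℕ → Tm F) (hg : Admissible g) (k : ℕ) (s : Tm F)
    (hso : s.Orderly) (hsk : s.VarsLE k) :
    ∃ δ, StepSub k δ ∧ Dich ℬ n Y (scomp δ g) k s := by
  classical
  set h : ℕ → Tm F := fun i => g (i + (k + 1)) with hh_def
  have hh : Admissible h := admissible_tail hg (k + 1)
  set 𝒯 : Tm F → β := fun t => ℬ (t.subst h) with hT_def
  have red𝒯ℬ : OAReduction 𝒯 ℬ := ⟨h, hh, fun u _ => rfl⟩
  have red𝒯𝒜 : OAReduction 𝒯 𝒜 := oaReduction_trans red𝒯ℬ hB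
  set b : β := ℬ (s.subst g) with hb_def
  obtain ⟨𝒞, ⟨τ, hτ, hCeq⟩, hom⟩ := IH 𝒯 red𝒯𝒜 (Y b) (hY b)
  set δ : ℕ → Tm F := fun i =>
    if i ≤ k then Tm.var i else (τ (i - (k + 1))).subst (fun a => Tm.var (a + (k + 1)))
    with hδ_def
  have hδfix : ∀ i ≤ k, δ i = Tm.var i := fun i hi => by simp [hδ_def, hi]
  have hδgt' : ∀ i, k < i → δ i = (τ (i - (k + 1))).subst (fun a => Tm.var (a + (k + 1))) :=
    fun i hi => by simp [hδ_def, Nat.not_le.mpr hi]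
  have hδgt : ∀ i, k < i → (δ i).VarsGT k := by
    intro i hi v hv
    rw [hδgt' i hi, varList_rename] at hv
    obtain ⟨w, _, hw⟩ := List.mem_map.mp hv
    omega
  have hδord : ∀ i, (δ i).Orderly := by
    intro i
    rcases le_or_gt i k with hi | hi
    · rw [hδfix i hi]; simp [Orderly, varList, List.Chain', List.isChain_singleton]
    · rw [hδgt' i hi]
      exact (hτ.1 _).rename (fun a _ b _ hab => by omega)
  have hδlt : ∀ i, TermLT (δ i) (δ (i + 1)) := by
    intro i
    rcases le_or_gt (i + 1) k with hi | hi
    · rw [hδfix i (by omega), hδfix (i + 1) hi]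
      exact ⟨i, i + 1, by simp [varList], by simp [varList], by omega⟩
    rcases le_or_gt i k with hi' | hi'
    · -- i ≤ k < i + 1, so i = k
      rw [hδfix i hi', hδgt' (i + 1) hi]
      have hne : (τ (i + 1 - (k + 1))).varList ≠ [] := varList_ne_nil _
      have hhd : (τ (i + 1 - (k + 1))).varList.head? =
          some ((τ (i + 1 - (k + 1))).varList.head hne) := List.head?_eq_head hne
      refine ⟨i, (τ (i + 1 - (k + 1))).varList.head hne + (k + 1), by simp [varList], ?_, by omega⟩
      rw [varList_rename, List.head?_map, hhd]
      rfl
    · rw [hδgt' i hi', hδgt' (i + 1) (by omega)]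
      have : i + 1 - (k + 1) = (i - (k + 1)) + 1 := by omega
      rw [this]
      exact (hτ.2 (i - (k + 1))).rename (fun a _ c _ hac => by omega)
  have hδ : StepSub k δ := ⟨⟨hδord, hδlt⟩, hδfix, hδgt⟩
  refine ⟨δ, hδ, ?_⟩
  have hbval : ℬ (s.subst (scomp δ g)) = b := by
    rw [hb_def]; exact congrArg ℬ (subst_scomp_eq hδ hsk g)
  -- key computation
  have key : ∀ t : Fin n → Tm F, OrdTuple t → (∀ j, (t j).VarsGT k) →
      ∃ u : Fin n → Tm F, OrdTuple u ∧
        ∀ j, ℬ ((t j).subst (scomp δ g)) = 𝒞 (u j) := by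
    intro t ht hgt
    set u : Fin n → Tm F := fun j => (t j).subst (fun v => Tm.var (v - (k + 1))) with hu_def
    have huord : ∀ j, (u j).Orderly :=
      fun j => (ht.1 j).rename (fun a ha c hc hac => by
        have := hgt j a ha; have := hgt j c hc; omega)
    have hult : ∀ i j : Fin n, i < j → TermLT (u i) (u j) := by
      intro i j hij
      refine (ht.2 i j hij).rename (fun a ha c hc hac => ?_)
      have := hgt i a (List.mem_of_mem_getLast? ha)
      have := hgt j c (List.mem_of_mem_head? hc)
      omega
    refine ⟨u, ⟨huord, hult⟩, fun j => ?_⟩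
    have e1 : (t j).subst (scomp δ g) =
        (t j).subst (fun i => (τ (i - (k + 1))).subst h) := by
      refine Tm.subst_congr (fun i hi => ?_)
      have hik : k < i := hgt j i hi
      show (δ i).subst g = _
      rw [hδgt' i hik, Tm.subst_subst]
      rfl
    have e2 : 𝒞 (u j) = ℬ ((t j).subst (fun i => (τ (i - (k + 1))).subst h)) := by
      rw [hCeq (u j) (huord j), hT_def]
      show ℬ (((u j).subst τ).subst h) = _
      rw [Tm.subst_subst, hu_def]
      show ℬ ((((t j).subst fun v => Tm.var (v - (k + 1))).subst
        fun i => (τ i).subst h)) = _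
      rw [Tm.subst_subst]
      rfl
    rw [e1, e2]
  rcases hom with hom | hom
  · left
    intro t ht hgt
    obtain ⟨u, hu, heq⟩ := key t ht hgt
    have : (fun j => ℬ ((t j).subst (scomp δ g))) = fun j => 𝒞 (u j) := funext heq
    rw [hbval, this]
    exact hom ⟨u, hu, fun j => rfl⟩
  · right
    intro t ht hgt
    obtain ⟨u, hu, heq⟩ := key t ht hgt
    have he : (fun j => ℬ ((t j).subst (scomp δ g))) = fun j => 𝒞 (u j) := funext heq
    rw [hbval, he]
    intro hc
    have : (fun j => 𝒞 (u j)) ∈ OATuple n 𝒞 ∩ Y b := ⟨⟨u, hu, fun j => rfl⟩, hc⟩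
    rw [hom] at this
    exact this

theorem step_list
    (IH : ∀ 𝒯 : Tm F → β, OAReduction 𝒯 𝒜 → ∀ Z : Set (Fin n → β),
      Z ⊆ { x | ∀ i, x i ∈ OAUniv 𝒜 } →
      ∃ 𝒞, OAReduction 𝒞 𝒯 ∧ (OATuple n 𝒞 ⊆ Z ∨ OATuple n 𝒞 ∩ Z = ∅))
    (hB : OAReduction ℬ 𝒜) {Y : β → Set (Fin n → β)}
    (hY : ∀ b, Y b ⊆ { x | ∀ i, x i ∈ OAUniv 𝒜 }) (k : ℕ) :
    ∀ (L : List (Tm F)) (g : ℕ → Tm F), Admissible g →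
    ∃ δ, StepSub k δ ∧ ∀ s ∈ L, s.Orderly → s.VarsLE k →
      Dich ℬ n Y (scomp δ g) k s := by
  intro L
  induction L with
  | nil => exact fun g _ => ⟨Tm.var, stepSub_var k, fun s hs => by simp at hs⟩
  | cons s L ihL =>
    intro g hg
    obtain ⟨δ₁, hδ₁, hL⟩ := ihL g hg
    by_cases hs : s.Orderly ∧ s.VarsLE k
    · obtain ⟨δ₂, hδ₂, hds⟩ := handle_one IH hB hY (scomp δ₁ g) (hg.comp hδ₁.adm) k s hs.1 hs.2
      refine ⟨scomp δ₂ δ₁, hδ₂.scomp_closure hδ₁, ?_⟩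
      intro s' hs' hso hsk
      rw [scomp_assoc]
      rcases List.mem_cons.mp hs' with h | h
      · subst h; exact hds
      · exact dich_transfer ℬ n Y hδ₂ le_rfl hsk (hL s' h hso hsk)
    · refine ⟨δ₁, hδ₁, fun s' hs' hso hsk => ?_⟩
      rcases List.mem_cons.mp hs' with h | h
      · exact absurd ⟨h ▸ hso, h ▸ hsk⟩ hs
      · exact hL s' h hso hsk

theorem fusion
    (IH : ∀ 𝒯 : Tm F → β, OAReduction 𝒯 𝒜 → ∀ Z : Set (Fin n → β),
      Z ⊆ { x | ∀ i, x i ∈ OAUniv 𝒜 } →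
      ∃ 𝒞, OAReduction 𝒞 𝒯 ∧ (OATuple n 𝒞 ⊆ Z ∨ OATuple n 𝒞 ∩ Z = ∅))
    (hB : OAReduction ℬ 𝒜) {Y : β → Set (Fin n → β)}
    (hY : ∀ b, Y b ⊆ { x | ∀ i, x i ∈ OAUniv 𝒜 }) :
    ∃ e : ℕ → Tm F, Admissible e ∧ ∀ s : Tm F, s.Orderly →
      Dich ℬ n Y e s.maxv s := by
  classical
  have hstep : ∀ k (g : ℕ → Tm F), Admissible g → ∃ g', Admissible g' ∧
      (∃ δ, StepSub k δ ∧ g' = scomp δ g) ∧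
      ∀ s : Tm F, s.Orderly → s.VarsLE k → Dich ℬ n Y g' k s := by
    intro k g hg
    obtain ⟨L, hLmem⟩ := Tm.exists_list_orderly_varsLE (F := F) k
    obtain ⟨δ, hδ, hd⟩ := step_list IH hB hY k L g hg
    exact ⟨scomp δ g, hg.comp hδ.adm, ⟨δ, hδ, rfl⟩,
      fun s hso hsk => hd s (hLmem s hso hsk) hso hsk⟩
  -- construct the fusion sequence
  let G : ℕ → {g : ℕ → Tm F // Admissible g} := fun k =>
    Nat.rec ⟨Tm.var, Tm.admissible_var⟩
      (fun k gp => ⟨Classical.choose (hstep k gp.1 gp.2),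
        (Classical.choose_spec (hstep k gp.1 gp.2)).1⟩) k
  have hGrec : ∀ k, (∃ δ, StepSub k δ ∧ (G (k + 1)).1 = scomp δ (G k).1) ∧
      ∀ s : Tm F, s.Orderly → s.VarsLE k → Dich ℬ n Y (G (k + 1)).1 k s :=
    fun k => ⟨(Classical.choose_spec (hstep k (G k).1 (G k).2)).2.1,
      (Classical.choose_spec (hstep k (G k).1 (G k).2)).2.2⟩
  -- stage-transfer substitutions
  have hSig : ∀ k m, k ≤ m → ∃ Sg, StepSub k Sg ∧ (G m).1 = scomp Sg (G k).1 := by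
    intro k m hkm
    induction m, hkm using Nat.le_induction with
    | base => exact ⟨Tm.var, stepSub_var k, by funext i; rfl⟩
    | succ m hkm ih =>
      obtain ⟨Sg, hSg, hGm⟩ := ih
      obtain ⟨δ, hδ, hGm1⟩ := (hGrec m).1
      refine ⟨scomp δ Sg, (hδ.mono hkm).scomp_closure hSg, ?_⟩
      rw [hGm1, hGm, scomp_assoc]
  set e : ℕ → Tm F := fun i => (G (i + 1)).1 i with he_def
  have stab : ∀ m i, i < m → (G m).1 i = e i := by
    intro m
    induction m with
    | zero => omega
    | succ m ihm =>
      intro i him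
      rcases Nat.lt_or_ge i m with h' | h'
      · obtain ⟨δ, hδ, hGm1⟩ := (hGrec m).1
        rw [hGm1]
        show (δ i).subst (G m).1 = e i
        rw [hδ.fix i (by omega)]
        show (G m).1 i = e i
        exact ihm i h'
      · have : i = m := by omega
        subst this
        rfl
  have hAdme : Admissible e := by
    constructor
    · intro i; exact (G (i + 1)).2.1 i
    · intro i
      have h1 : e i = (G (i + 2)).1 i := (stab (i + 2) i (by omega)).symm
      have h2 : e (i + 1) = (G (i + 2)).1 (i + 1) := (stab (i + 2) (i + 1) (by omega)).symm
      rw [h1, h2]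
      exact (G (i + 2)).2.2 i
  refine ⟨e, hAdme, ?_⟩
  intro s hso
  set k : ℕ := s.maxv with hk_def
  have hdich : Dich ℬ n Y (G (k + 1)).1 k s := (hGrec k).2 s hso (Tm.varsLE_maxv s)
  have hbe : ℬ (s.subst e) = ℬ (s.subst (G (k + 1)).1) := by
    congr 1
    refine Tm.subst_congr (fun i hi => ?_)
    exact (stab (k + 1) i (by have := Tm.varsLE_maxv s i hi; omega)).symm
  have key : ∀ t : Fin n → Tm F, OrdTuple t → (∀ j, (t j).VarsGT k) →
      ∃ t' : Fin n → Tm F, OrdTuple t' ∧ (∀ j, (t' j).VarsGT k) ∧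
        ∀ j, ℬ ((t j).subst e) = ℬ ((t' j).subst (G (k + 1)).1) := by
    intro t ht hgt
    set M : ℕ := k + 2 + (Finset.univ.sup fun j => (t j).maxv) with hM_def
    have hvM : ∀ j, ∀ v ∈ (t j).varList, v < M := by
      intro j v hv
      have h1 : v ≤ (t j).maxv := le_foldmax hv
      have h2 : (t j).maxv ≤ Finset.univ.sup fun j => (t j).maxv := by
        simpa using Finset.le_sup (f := fun j => (t j).maxv) (Finset.mem_univ j)
      omega
    obtain ⟨Sg, hSg, hGM⟩ := hSig (k + 1) M (by omega)
    refine ⟨fun j => (t j).subst Sg, ordTuple_subst ht hSg.adm.1 hSg.adm.good,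
      fun j => Tm.varsGT_subst (hgt j) (hSg.gt' (by omega)), fun j => ?_⟩
    have e1 : (t j).subst e = (t j).subst (G M).1 :=
      Tm.subst_congr (fun i hi => (stab M i (hvM j i hi)).symm)
    rw [e1, hGM]
    show ℬ ((t j).subst (fun i => (Sg i).subst (G (k + 1)).1)) = _
    rw [← Tm.subst_subst]
  rcases hdich with h | h
  · left
    intro t ht hgt
    obtain ⟨t', h1, h2, h3⟩ := key t ht hgt
    have he2 : (fun j => ℬ ((t j).subst e)) = fun j => ℬ ((t' j).subst (G (k + 1)).1) :=
      funext h3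
    rw [hbe, he2]
    exact h t' h1 h2
  · right
    intro t ht hgt
    obtain ⟨t', h1, h2, h3⟩ := key t ht hgt
    have he2 : (fun j => ℬ ((t j).subst e)) = fun j => ℬ ((t' j).subst (G (k + 1)).1) :=
      funext h3
    rw [hbe, he2]
    exact h t' h1 h2

end Fusion2

/-- If an orderly algebra (over a finite language with no
nullary and no unary function symbols) is Ramsey, then for every reduction
`ℬ`, every `n` and every `X ⊆ ‖𝒜‖ⁿ` there is a reduction `𝒞` of `ℬ` with
`‖𝒞‖ⁿ_<` contained in or disjoint from `X`. -/
theorem milliken_taylor_orderly {F : ℕ → Type u} [IsEmpty (F 0)]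
    [IsEmpty (F 1)] [Finite (Σ n, F n)] {β : Type w}
    (𝒜 : Tm F → β) (h𝒜 : IsOrderlyAlg 𝒜) (hR : RamseyOA 𝒜) :
    ∀ ℬ, OAReduction ℬ 𝒜 → ∀ (n : ℕ) (X : Set (Fin n → β)),
      X ⊆ { x | ∀ i, x i ∈ OAUniv 𝒜 } →
      ∃ 𝒞, OAReduction 𝒞 ℬ ∧ (OATuple n 𝒞 ⊆ X ∨ OATuple n 𝒞 ∩ X = ∅) := by
  classical
  intro ℬ hB n
  induction n generalizing ℬ with
  | zero =>
    intro X hX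
    refine ⟨ℬ, oaReduction_refl, ?_⟩
    by_cases h : (fun i : Fin 0 => (i.elim0 : β)) ∈ X
    · left
      intro x _
      have hx0 : x = fun i : Fin 0 => i.elim0 := funext fun i => i.elim0
      rwa [hx0]
    · right
      rw [Set.eq_empty_iff_forall_notMem]
      rintro x ⟨_, hx2⟩
      have hx0 : x = fun i : Fin 0 => i.elim0 := funext fun i => i.elim0
      rw [hx0] at hx2
      exact h hx2
  | succ n ihn =>
    intro X hX
    set Y : β → Set (Fin n → β) := fun b => { x | Fin.cons b x ∈ X } with hY_def
    have hY : ∀ b, Y b ⊆ { x | ∀ i, x i ∈ OAUniv 𝒜 } := by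
      intro b x hx i
      have := hX hx i.succ
      rwa [Fin.cons_succ] at this
    obtain ⟨e, hAdme, hdich⟩ := fusion (𝒜 := 𝒜) (ℬ := ℬ) (n := n) ihn hB hY
    have red𝒟ℬ : OAReduction (fun s : Tm F => ℬ (s.subst e)) ℬ :=
      ⟨e, hAdme, fun s _ => rfl⟩
    have red𝒟𝒜 : OAReduction (fun s : Tm F => ℬ (s.subst e)) 𝒜 :=
      oaReduction_trans red𝒟ℬ hB
    set Z : Set β := { b | ∃ s : Tm F, s.Orderly ∧ ℬ (s.subst e) = b ∧
      ∀ t : Fin n → Tm F, OrdTuple t → (∀ j, (t j).VarsGT s.maxv) →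
        (fun j => ℬ ((t j).subst e)) ∈ Y (ℬ (s.subst e)) } with hZ_def
    have hZ : Z ⊆ OAUniv 𝒜 := by
      rintro b ⟨s, hso, hb, _⟩
      obtain ⟨a, ha, hBa⟩ := hB
      have h1 : (s.subst e).Orderly := hso.subst hAdme.1 hAdme.good
      refine ⟨(s.subst e).subst a, h1.subst ha.1 ha.good, ?_⟩
      rw [← hBa _ h1, hb]
    obtain ⟨𝒞, red𝒞𝒟, hom⟩ := hR _ red𝒟𝒜 Z hZ
    obtain ⟨τ, hτ, hCD⟩ := red𝒞𝒟
    refine ⟨𝒞, oaReduction_trans ⟨τ, hτ, hCD⟩ red𝒟ℬ, ?_⟩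
    -- common set-up for a tuple from 𝒞
    have setup : ∀ t : Fin (n + 1) → Tm F, OrdTuple t →
        ∃ (s₀ : Tm F) (u : Fin n → Tm F), s₀.Orderly ∧ OrdTuple u ∧
          (∀ j, (u j).VarsGT s₀.maxv) ∧ 𝒞 (t 0) = ℬ (s₀.subst e) ∧
          (fun i => 𝒞 (t i)) = Fin.cons (𝒞 (t 0)) (fun j => ℬ ((u j).subst e)) := by
      intro t ht
      set s₀ : Tm F := (t 0).subst τ with hs₀_def
      have hs₀o : s₀.Orderly := (ht.1 0).subst hτ.1 hτ.good
      set u : Fin n → Tm F := fun j => (t j.succ).subst τ with hu_def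
      have huo : ∀ j, (u j).Orderly := fun j => (ht.1 j.succ).subst hτ.1 hτ.good
      have hult : ∀ i j : Fin n, i < j → Tm.TermLT (u i) (u j) := fun i j hij =>
        (ht.2 i.succ j.succ (by simpa using hij)).subst hτ.good
      have hugt : ∀ j, (u j).VarsGT s₀.maxv := fun j =>
        Tm.varsGT_of_termLT hs₀o (huo j)
          ((ht.2 0 j.succ (Fin.succ_pos j)).subst hτ.good)
      refine ⟨s₀, u, hs₀o, ⟨huo, hult⟩, hugt, hCD (t 0) (ht.1 0), ?_⟩
      funext i
      refine Fin.cases ?_ ?_ i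
      · rw [Fin.cons_zero]
      · intro j
        rw [Fin.cons_succ]
        exact hCD (t j.succ) (ht.1 j.succ)
    rcases hom with hl | hr
    · left
      rintro x ⟨t, ht, hx⟩
      obtain ⟨s₀, u, hs₀o, hu, hugt, hb, hxeq⟩ := setup t ht
      have hbZ : 𝒞 (t 0) ∈ Z := hl ⟨t 0, ht.1 0, rfl⟩
      obtain ⟨s', hs'o, hs'b, hIn'⟩ := hbZ
      -- dichotomy for s₀
      have hIn : ∀ tt : Fin n → Tm F, OrdTuple tt → (∀ j, (tt j).VarsGT s₀.maxv) →
          (fun j => ℬ ((tt j).subst e)) ∈ Y (ℬ (s₀.subst e)) := by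
        rcases hdich s₀ hs₀o with h | h
        · exact h
        · exfalso
          set M : ℕ := max s₀.maxv s'.maxv with hM_def
          set w : Fin n → Tm F := fun j => Tm.var (M + 1 + j) with hw_def
          have hwo : OrdTuple w := by
            constructor
            · intro j; simp [hw_def, Tm.Orderly, Tm.varList, List.Chain', List.isChain_singleton]
            · intro i j hij
              exact ⟨M + 1 + i, M + 1 + j, by simp [hw_def, Tm.varList],
                by simp [hw_def, Tm.varList], by have : (i : ℕ) < j := hij; omega⟩
          have hw1 : ∀ j, (w j).VarsGT s₀.maxv := by
            intro j v hv
            simp [hw_def, Tm.varList] at hv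
            omega
          have hw2 : ∀ j, (w j).VarsGT s'.maxv := by
            intro j v hv
            simp [hw_def, Tm.varList] at hv
            omega
          have hin := hIn' w hwo hw2
          rw [hs'b, hb] at hin
          exact h w hwo hw1 hin
      have hmem := hIn u hu hugt
      rw [← hb] at hmem
      have hxX : Fin.cons (𝒞 (t 0)) (fun j => ℬ ((u j).subst e)) ∈ X := hmem
      have hxfun : x = Fin.cons (𝒞 (t 0)) (fun j => ℬ ((u j).subst e)) := by
        rw [← hxeq]; exact funext hx
      rwa [← hxfun] at hxX
    · right
      rw [Set.eq_empty_iff_forall_notMem]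
      rintro x ⟨⟨t, ht, hx⟩, hxX⟩
      obtain ⟨s₀, u, hs₀o, hu, hugt, hb, hxeq⟩ := setup t ht
      have hbnZ : 𝒞 (t 0) ∉ Z := by
        intro hbZ
        have : 𝒞 (t 0) ∈ OAUniv 𝒞 ∩ Z := ⟨⟨t 0, ht.1 0, rfl⟩, hbZ⟩
        rw [hr] at this
        exact this
      rcases hdich s₀ hs₀o with h | h
      · exact hbnZ ⟨s₀, hs₀o, hb.symm, h⟩
      · have hxfun : x = Fin.cons (𝒞 (t 0)) (fun j => ℬ ((u j).subst e)) := by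
          rw [← hxeq]; exact funext hx
        rw [hxfun] at hxX
        have : (fun j => ℬ ((u j).subst e)) ∈ Y (𝒞 (t 0)) := hxX
        rw [hb] at this
        exact h u hu hugt this
end

section
/- Let L be the first-order language with a single binary function symbol f, and define for each orderly term t a pair of terms (tˣ, tʸ) by recursion: (vᵢˣ, vᵢʸ) = (v_{2i}, v_{2i+1}) for all i, and ((f s t)ˣ, (f s t)ʸ) = (f sˣ sʸ, f tˣ tʸ) for orderly terms s < t. Then: (a) for every orderly term t, both tˣ and tʸ are orderly and tˣ < tʸ; and (b) for every orderly L-algebra 𝒜, the function ♯𝒜 defined by ♯𝒜(t) = (𝒜(tˣ), 𝒜(tʸ)) is an orderly L-algebra whose universe is contained in { (𝒜(s), 𝒜(t)) : s, t orderly terms with s < t }. -/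
open Function Set

universe u v w

lemma finRange_two : List.finRange 2 = [0, 1] := by decide

lemma varList_func2 (ts : Fin 2 → Tm BinF) :
    (Tm.func BinF.f ts).varList = (ts 0).varList ++ (ts 1).varList := by
  simp [Tm.varList, finRange_two]

lemma varList_fapp (s u : Tm BinF) :
    (fapp s u).varList = s.varList ++ u.varList := by
  simp [fapp, varList_func2]

lemma xyPair_spec (t : Tm BinF) :
    t.varList ≠ [] ∧
    (xyPair t).1.varList.head? = t.varList.head?.map (fun i => 2 * i) ∧
    (xyPair t).2.varList.getLast? = t.varList.getLast?.map (fun i => 2 * i + 1) ∧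
    (t.Orderly → (xyPair t).1.Orderly ∧ (xyPair t).2.Orderly ∧
      Tm.TermLT (xyPair t).1 (xyPair t).2) := by
  induction t with
  | var i =>
      refine ⟨by simp [Tm.varList], by simp [xyPair, Tm.varList],
        by simp [xyPair, Tm.varList], ?_⟩
      intro _
      refine ⟨by simp [xyPair, Tm.Orderly, Tm.varList, List.Chain'],
        by simp [xyPair, Tm.Orderly, Tm.varList, List.Chain'], ?_⟩
      exact ⟨2 * i, 2 * i + 1, by simp [xyPair, Tm.varList],
        by simp [xyPair, Tm.varList], by omega⟩
  | func f ts ih =>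
      cases f
      obtain ⟨hs0, hh0, hl0, ho0⟩ := ih 0
      obtain ⟨hs1, hh1, hl1, ho1⟩ := ih 1
      obtain ⟨a0, ha0⟩ := Option.isSome_iff_exists.mp (List.isSome_head?.mpr hs0)
      obtain ⟨b0, hb0⟩ := Option.isSome_iff_exists.mp (List.getLast?_isSome.mpr hs0)
      obtain ⟨a1, ha1⟩ := Option.isSome_iff_exists.mp (List.isSome_head?.mpr hs1)
      obtain ⟨b1, hb1⟩ := Option.isSome_iff_exists.mp (List.getLast?_isSome.mpr hs1)
      have hx0 : (xyPair (ts 0)).1.varList ≠ [] := by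
        intro h; rw [h] at hh0; rw [ha0] at hh0; simp at hh0
      have hy0 : (xyPair (ts 0)).2.varList ≠ [] := by
        intro h; rw [h] at hl0; rw [hb0] at hl0; simp at hl0
      have hx1 : (xyPair (ts 1)).1.varList ≠ [] := by
        intro h; rw [h] at hh1; rw [ha1] at hh1; simp at hh1
      have hy1 : (xyPair (ts 1)).2.varList ≠ [] := by
        intro h; rw [h] at hl1; rw [hb1] at hl1; simp at hl1
      refine ⟨?_, ?_, ?_, ?_⟩
      · rw [varList_func2]; simp [hs0]
      · show (fapp (xyPair (ts 0)).1 (xyPair (ts 0)).2).varList.head? = _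
        rw [varList_fapp, varList_func2, List.head?_append_of_ne_nil _ hx0,
          List.head?_append_of_ne_nil _ hs0, hh0]
      · show (fapp (xyPair (ts 1)).1 (xyPair (ts 1)).2).varList.getLast? = _
        rw [varList_fapp, varList_func2, List.getLast?_append_of_ne_nil _ hy1,
          List.getLast?_append_of_ne_nil _ hs1, hl1]
      · intro hOrd
        rw [Tm.Orderly, varList_func2, List.Chain', List.isChain_append] at hOrd
        obtain ⟨c0, c1, cross⟩ := hOrd
        obtain ⟨o0x, o0y, lt0⟩ := ho0 c0
        obtain ⟨o1x, o1y, lt1⟩ := ho1 c1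
        refine ⟨?_, ?_, ?_⟩
        · show ((fapp (xyPair (ts 0)).1 (xyPair (ts 0)).2).varList).Chain' (· < ·)
          rw [varList_fapp, List.Chain', List.isChain_append]
          refine ⟨o0x, o0y, ?_⟩
          obtain ⟨i, j, hi, hj, hij⟩ := lt0
          intro x hx y hy
          rw [hi, Option.mem_some_iff] at hx
          rw [hj, Option.mem_some_iff] at hy
          omega
        · show ((fapp (xyPair (ts 1)).1 (xyPair (ts 1)).2).varList).Chain' (· < ·)
          rw [varList_fapp, List.Chain', List.isChain_append]
          refine ⟨o1x, o1y, ?_⟩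
          obtain ⟨i, j, hi, hj, hij⟩ := lt1
          intro x hx y hy
          rw [hi, Option.mem_some_iff] at hx
          rw [hj, Option.mem_some_iff] at hy
          omega
        · refine ⟨2 * b0 + 1, 2 * a1, ?_, ?_, ?_⟩
          · show (fapp (xyPair (ts 0)).1 (xyPair (ts 0)).2).varList.getLast? = _
            rw [varList_fapp, List.getLast?_append_of_ne_nil _ hy0, hl0, hb0]
            rfl
          · show (fapp (xyPair (ts 1)).1 (xyPair (ts 1)).2).varList.head? = _
            rw [varList_fapp, List.head?_append_of_ne_nil _ hx1, hh1, ha1]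
            rfl
          · have := cross b0 (by rw [hb0]; rfl) a1 (by rw [ha1]; rfl)
            omega

lemma ordTuple_pair {s u : Tm BinF} (hs : s.Orderly) (hu : u.Orderly)
    (h : Tm.TermLT s u) : OrdTuple ![s, u] := by
  constructor
  · intro i; fin_cases i <;> simpa
  · intro i j hij
    fin_cases i <;> fin_cases j <;>
      first
        | exact absurd hij (by decide)
        | simpa using h

/-- (a) For every orderly term `t`, both `tˣ` and `tʸ` are
orderly and `tˣ < tʸ`; (b) for every orderly algebra `𝒜`, `♯𝒜` is an orderly
algebra whose universe is contained in `{(𝒜 s, 𝒜 t) : s < t orderly}`. -/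
theorem sharp_well_defined :
    (∀ t : Tm BinF, t.Orderly →
      (xyPair t).1.Orderly ∧ (xyPair t).2.Orderly ∧
        Tm.TermLT (xyPair t).1 (xyPair t).2) ∧
    (∀ (β : Type w) (𝒜 : Tm BinF → β), IsOrderlyAlg 𝒜 →
      IsOrderlyAlg (sharpOA 𝒜) ∧
      OAUniv (sharpOA 𝒜) ⊆
        { p : β × β | ∃ s t : Tm BinF,
            s.Orderly ∧ t.Orderly ∧ Tm.TermLT s t ∧ p = (𝒜 s, 𝒜 t) }) := by
  have parta : ∀ t : Tm BinF, t.Orderly →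
      (xyPair t).1.Orderly ∧ (xyPair t).2.Orderly ∧
        Tm.TermLT (xyPair t).1 (xyPair t).2 :=
    fun t ht => (xyPair_spec t).2.2.2 ht
  refine ⟨parta, ?_⟩
  intro β 𝒜 h𝒜
  constructor
  · intro n f t t' ht ht' hk
    cases f
    obtain ⟨o0x, o0y, l0⟩ := parta (t 0) (ht.1 0)
    obtain ⟨o1x, o1y, l1⟩ := parta (t 1) (ht.1 1)
    obtain ⟨o0x', o0y', l0'⟩ := parta (t' 0) (ht'.1 0)
    obtain ⟨o1x', o1y', l1'⟩ := parta (t' 1) (ht'.1 1)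
    have e0 := hk 0
    have e1 := hk 1
    rw [sharpOA, Prod.mk.injEq] at e0 e1
    have key : ∀ (a b : Tm BinF), a.Orderly → b.Orderly → Tm.TermLT a b →
        ∀ (a' b' : Tm BinF), a'.Orderly → b'.Orderly → Tm.TermLT a' b' →
        𝒜 a = 𝒜 a' → 𝒜 b = 𝒜 b' → 𝒜 (fapp a b) = 𝒜 (fapp a' b') := by
      intro a b ha hb hab a' b' ha' hb' hab' e1 e2
      refine h𝒜 2 BinF.f ![a, b] ![a', b'] (ordTuple_pair ha hb hab)
        (ordTuple_pair ha' hb' hab') ?_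
      intro k; fin_cases k <;> simpa using (by assumption : _)
    show (𝒜 _, 𝒜 _) = (𝒜 _, 𝒜 _)
    simp only [xyPair]
    exact Prod.ext
      (key _ _ o0x o0y l0 _ _ o0x' o0y' l0' e0.1 e0.2)
      (key _ _ o1x o1y l1 _ _ o1x' o1y' l1' e1.1 e1.2)
  · rintro p ⟨t, ht, rfl⟩
    exact ⟨(xyPair t).1, (xyPair t).2, (parta t ht).1, (parta t ht).2.1,
      (parta t ht).2.2, rfl⟩
end
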